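/- Arm Lemma (disjointness under strict first turn). Let u_0, u_1, ..., u_m and v_0, v_1, ..., v_m be points of ℝ² (identified with ℂ) such that: (i) u_0 = v_0; (ii) |u_j − u_{j−1}| = |v_j − v_{j−1}| for j = 1, ..., m; (iii) for each j = 1, ..., m the differences u_j − u_{j−1} and v_j − v_{j−1} are nonzero and their arguments lie in the open interval (−π/10, π/10); (iv) arg(v_j − v_{j−1}) ≥ arg(u_j − u_{j−1}) for each j = 1, ..., m, with strict inequality arg(v_1 − v_0) > arg(u_1 − u_0) for j = 1. Then the broken line through u_0, ..., u_m and the broken line through v_0, ..., v_m intersect exactly in the single point u_0 = v_0. -/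

import Mathlib

open Complex Real Set

private lemma key_ineq {φ : ℝ} (h : |φ| ≤ π/10) :
    |Real.sin φ| * Real.cos (π/10) ≤ Real.sin (π/10) * Real.cos φ := by
  have hpi := Real.pi_pos
  have h0 := abs_nonneg φ
  have h3 : 0 ≤ Real.sin (π/10 - |φ|) :=
    Real.sin_nonneg_of_nonneg_of_le_pi (by linarith) (by linarith)
  rw [Real.sin_sub] at h3
  have hc : Real.cos |φ| = Real.cos φ := Real.cos_abs φ
  have hs : Real.sin |φ| = |Real.sin φ| := by
    rcases abs_cases φ with ⟨h1, h2⟩ | ⟨h1, h2⟩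
    · rw [h1, _root_.abs_of_nonneg (Real.sin_nonneg_of_nonneg_of_le_pi h2 (by linarith [h1 ▸ h]))]
    · have hneg : Real.sin φ ≤ 0 := by
        have hge : -π ≤ φ := by linarith [h1 ▸ h]
        exact Real.sin_nonpos_of_nonpos_of_neg_pi_le h2.le (by linarith)
      rw [h1, Real.sin_neg, _root_.abs_of_nonpos hneg]
  rw [hc, hs] at h3
  linarith

private lemma cone_vec {z : ℂ} (hz : z ≠ 0) (harg : Complex.arg z ∈ Set.Ioo (-(π/10)) (π/10)) :
    0 < z.re ∧ |z.im| * Real.cos (π/10) ≤ Real.sin (π/10) * z.re := by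
  have hpi := Real.pi_pos
  obtain ⟨h1, h2⟩ := harg
  have habs : 0 < ‖z‖ := by simpa using hz
  have hre : z.re = ‖z‖ * Real.cos (Complex.arg z) := by
    rw [Complex.cos_arg hz]; field_simp
  have him : z.im = ‖z‖ * Real.sin (Complex.arg z) := by
    rw [Complex.sin_arg]; field_simp
  have hcos : 0 < Real.cos (Complex.arg z) :=
    Real.cos_pos_of_mem_Ioo ⟨by linarith, by linarith⟩
  have habsarg : |Complex.arg z| ≤ π/10 := by rw [abs_le]; constructor <;> linarith
  have hk := key_ineq habsarg
  constructor
  · rw [hre]; positivity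
  · rw [hre, him, abs_mul, _root_.abs_of_nonneg habs.le]
    nlinarith [abs_nonneg (Real.sin (Complex.arg z))]

private lemma cone_diff {U V : ℂ} (hU : U ≠ 0)
    (hlen : ‖U‖ = ‖V‖)
    (hUarg : Complex.arg U ∈ Set.Ioo (-(π/10)) (π/10))
    (hVarg : Complex.arg V ∈ Set.Ioo (-(π/10)) (π/10))
    (hmono : Complex.arg U ≤ Complex.arg V) :
    0 ≤ (V - U).im ∧ |(V - U).re| * Real.cos (π/10) ≤ Real.sin (π/10) * (V - U).im ∧
      (Complex.arg U < Complex.arg V → 0 < (V - U).im) := by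
  have hpi := Real.pi_pos
  have hV : V ≠ 0 := by
    intro h; rw [h] at hlen; simp at hlen; exact hU (by simpa using hlen)
  set α := Complex.arg U with hα
  set β := Complex.arg V with hβ
  set r := ‖U‖ with hr
  have hrpos : 0 < r := by simpa [hr] using hU
  have hUre : U.re = r * Real.cos α := by rw [hα, hr, Complex.cos_arg hU]; field_simp
  have hUim : U.im = r * Real.sin α := by rw [hα, hr, Complex.sin_arg]; field_simp
  have hVre : V.re = r * Real.cos β := by
    rw [hβ, Complex.cos_arg hV, hlen]; field_simp [norm_ne_zero_iff.mpr hV]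
  have hVim : V.im = r * Real.sin β := by
    rw [hβ, Complex.sin_arg, hlen]; field_simp [norm_ne_zero_iff.mpr hV]
  obtain ⟨ha1, ha2⟩ := hUarg
  obtain ⟨hb1, hb2⟩ := hVarg
  set ψ := (β - α) / 2 with hψ
  set φ := (β + α) / 2 with hφ
  have hψ0 : 0 ≤ ψ := by rw [hψ]; linarith
  have hψpi : ψ ≤ π := by rw [hψ]; linarith
  have hsψ : 0 ≤ Real.sin ψ := Real.sin_nonneg_of_nonneg_of_le_pi hψ0 hψpi
  have hφabs : |φ| ≤ π/10 := by rw [abs_le, hφ]; constructor <;> linarith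
  have hcφ : 0 < Real.cos φ := Real.cos_pos_of_mem_Ioo ⟨by rw [hφ]; linarith, by rw [hφ]; linarith⟩
  have hk := key_ineq hφabs
  have him : (V - U).im = r * (2 * Real.sin ψ * Real.cos φ) := by
    rw [Complex.sub_im, hVim, hUim]
    rw [show r * Real.sin β - r * Real.sin α = r * (Real.sin β - Real.sin α) by ring,
      Real.sin_sub_sin]
  have hre : (V - U).re = r * (-2 * Real.sin φ * Real.sin ψ) := by
    rw [Complex.sub_re, hVre, hUre]
    rw [show r * Real.cos β - r * Real.cos α = r * (Real.cos β - Real.cos α) by ring,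
      Real.cos_sub_cos]
  refine ⟨by rw [him]; positivity, ?_, ?_⟩
  · rw [him, hre]
    have : |r * (-2 * Real.sin φ * Real.sin ψ)| = |Real.sin φ| * (2 * r * Real.sin ψ) := by
      rw [abs_mul, _root_.abs_of_nonneg hrpos.le, abs_mul, abs_mul]
      rw [_root_.abs_of_nonneg hsψ]
      simp [abs_of_nonpos]
      ring
    rw [this]
    nlinarith [mul_le_mul_of_nonneg_right hk (by positivity : (0:ℝ) ≤ 2 * r * Real.sin ψ)]
  · intro hlt
    have hψlt : ψ < π := by rw [hψ]; linarith
    have : 0 < Real.sin ψ := Real.sin_pos_of_pos_of_lt_pi (by rw [hψ]; linarith) hψlt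
    rw [him]; positivity

private lemma tele (w : ℕ → ℂ) : ∀ a b : ℕ, 1 ≤ a → a - 1 ≤ b →
    w b - w (a - 1) = ∑ k ∈ Finset.Icc a b, (w k - w (k - 1)) := by
  intro a b ha hab
  obtain ⟨a', rfl⟩ : ∃ a', a = a' + 1 := ⟨a - 1, by omega⟩
  simp only [Nat.add_sub_cancel] at hab ⊢
  induction b, hab using Nat.le_induction with
  | base => rw [Finset.Icc_eq_empty (by omega)]; simp
  | succ b hb ih =>
    rw [Finset.sum_Icc_succ_top (by omega)]
    rw [← ih]
    simp only [Nat.add_sub_cancel]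
    ring

/-- **Arm Lemma (disjointness under strict first turn).** -/
theorem arm_lemma_disjoint_of_strict_first_turn (m : ℕ) (hm : 1 ≤ m) (u v : ℕ → ℂ)
    (h0 : u 0 = v 0)
    (hlen : ∀ j, 1 ≤ j → j ≤ m → ‖u j - u (j - 1)‖ = ‖v j - v (j - 1)‖)
    (hune : ∀ j, 1 ≤ j → j ≤ m → u j - u (j - 1) ≠ 0)
    (hvne : ∀ j, 1 ≤ j → j ≤ m → v j - v (j - 1) ≠ 0)
    (huarg : ∀ j, 1 ≤ j → j ≤ m →
      Complex.arg (u j - u (j - 1)) ∈ Set.Ioo (-(π / 10)) (π / 10))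
    (hvarg : ∀ j, 1 ≤ j → j ≤ m →
      Complex.arg (v j - v (j - 1)) ∈ Set.Ioo (-(π / 10)) (π / 10))
    (hmono : ∀ j, 1 ≤ j → j ≤ m →
      Complex.arg (u j - u (j - 1)) ≤ Complex.arg (v j - v (j - 1)))
    (hstrict : Complex.arg (u 1 - u 0) < Complex.arg (v 1 - v 0)) :
    (⋃ i ∈ Finset.Icc 1 m, segment ℝ (u (i - 1)) (u i)) ∩
      (⋃ j ∈ Finset.Icc 1 m, segment ℝ (v (j - 1)) (v j)) = {u 0} := by
  have hpi := Real.pi_pos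
  set C := Real.cos (π/10) with hCdef
  set S := Real.sin (π/10) with hSdef
  have hC : 0 < C := Real.cos_pos_of_mem_Ioo ⟨by linarith, by linarith⟩
  have hS : 0 < S := Real.sin_pos_of_pos_of_lt_pi (by linarith) (by linarith)
  have hSC : S < C := by
    have h1 : Real.cos (π/2 - π/10) < Real.cos (π/10) :=
      Real.cos_lt_cos_of_nonneg_of_le_pi (by linarith) (by linarith) (by linarith)
    rw [Real.cos_pi_div_two_sub] at h1
    exact h1
  -- K properties for u-increments
  have hKU : ∀ k, 1 ≤ k → k ≤ m →
      0 < (u k - u (k-1)).re ∧ |(u k - u (k-1)).im| * C ≤ S * (u k - u (k-1)).re :=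
    fun k h1 h2 => cone_vec (hune k h1 h2) (huarg k h1 h2)
  -- D properties for differences of increments
  have hDW : ∀ k, 1 ≤ k → k ≤ m →
      0 ≤ ((v k - v (k-1)) - (u k - u (k-1))).im ∧
      |((v k - v (k-1)) - (u k - u (k-1))).re| * C ≤
        S * ((v k - v (k-1)) - (u k - u (k-1))).im := by
    intro k h1 h2
    obtain ⟨a, b, _⟩ := cone_diff (hune k h1 h2) (hlen k h1 h2) (huarg k h1 h2)
      (hvarg k h1 h2) (hmono k h1 h2)
    exact ⟨a, b⟩
  have hDW1 : 0 < ((v 1 - v 0) - (u 1 - u 0)).im := by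
    obtain ⟨_, _, c⟩ := cone_diff (U := u 1 - u 0) (V := v 1 - v 0)
      (by have := hune 1 le_rfl hm; simpa using this)
      (by have := hlen 1 le_rfl hm; simpa using this)
      (by have := huarg 1 le_rfl hm; simpa using this)
      (by have := hvarg 1 le_rfl hm; simpa using this)
      (by have := hmono 1 le_rfl hm; simpa using this)
    exact c hstrict
  -- K is closed under addition and nonneg scaling
  have hKadd : ∀ x y : ℂ, (0 ≤ x.re ∧ |x.im| * C ≤ S * x.re) →
      (0 ≤ y.re ∧ |y.im| * C ≤ S * y.re) →
      (0 ≤ (x+y).re ∧ |(x+y).im| * C ≤ S * (x+y).re) := by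
    rintro x y ⟨h1, h2⟩ ⟨h3, h4⟩
    refine ⟨?_, ?_⟩
    · simp only [Complex.add_re]; linarith
    · simp only [Complex.add_re, Complex.add_im]
      nlinarith [mul_le_mul_of_nonneg_right (abs_add_le x.im y.im) hC.le]
  have hKsmul : ∀ (t : ℝ) (z : ℂ), 0 ≤ t → (0 ≤ z.re ∧ |z.im| * C ≤ S * z.re) →
      (0 ≤ (t • z).re ∧ |(t • z).im| * C ≤ S * (t • z).re) := by
    rintro t z ht ⟨h1, h2⟩
    have hre : (t • z).re = t * z.re := by simp
    have him : (t • z).im = t * z.im := by simp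
    rw [hre, him, abs_mul, _root_.abs_of_nonneg ht]
    exact ⟨by positivity, by nlinarith⟩
  have hDadd : ∀ x y : ℂ, (0 ≤ x.im ∧ |x.re| * C ≤ S * x.im) →
      (0 ≤ y.im ∧ |y.re| * C ≤ S * y.im) →
      (0 ≤ (x+y).im ∧ |(x+y).re| * C ≤ S * (x+y).im) := by
    rintro x y ⟨h1, h2⟩ ⟨h3, h4⟩
    refine ⟨?_, ?_⟩
    · simp only [Complex.add_im]; linarith
    · simp only [Complex.add_re, Complex.add_im]
      nlinarith [mul_le_mul_of_nonneg_right (abs_add_le x.re y.re) hC.le]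
  have hDsmul : ∀ (t : ℝ) (z : ℂ), 0 ≤ t → (0 ≤ z.im ∧ |z.re| * C ≤ S * z.im) →
      (0 ≤ (t • z).im ∧ |(t • z).re| * C ≤ S * (t • z).im) := by
    rintro t z ht ⟨h1, h2⟩
    have hre : (t • z).re = t * z.re := by simp
    have him : (t • z).im = t * z.im := by simp
    rw [hre, him, abs_mul, _root_.abs_of_nonneg ht]
    exact ⟨by positivity, by nlinarith⟩
  -- sums of u-increments over index sets within [1,m] are in cone K
  have hKsum : ∀ s : Finset ℕ, (∀ k ∈ s, 1 ≤ k ∧ k ≤ m) →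
      0 ≤ (∑ k ∈ s, (u k - u (k-1))).re ∧
        |(∑ k ∈ s, (u k - u (k-1))).im| * C ≤ S * (∑ k ∈ s, (u k - u (k-1))).re := by
    intro s hs
    refine Finset.sum_induction _ (fun z => 0 ≤ z.re ∧ |z.im| * C ≤ S * z.re)
      (fun x y hx hy => hKadd x y hx hy) (by norm_num) ?_
    intro k hk
    obtain ⟨h1, h2⟩ := hs k hk
    exact ⟨(hKU k h1 h2).1.le, (hKU k h1 h2).2⟩
  -- sums of (V-U) differences are in cone D
  have hDsum : ∀ s : Finset ℕ, (∀ k ∈ s, 1 ≤ k ∧ k ≤ m) →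
      0 ≤ (∑ k ∈ s, ((v k - v (k-1)) - (u k - u (k-1)))).im ∧
        |(∑ k ∈ s, ((v k - v (k-1)) - (u k - u (k-1)))).re| * C ≤
          S * (∑ k ∈ s, ((v k - v (k-1)) - (u k - u (k-1)))).im := by
    intro s hs
    refine Finset.sum_induction _ (fun z => 0 ≤ z.im ∧ |z.re| * C ≤ S * z.im)
      (fun x y hx hy => hDadd x y hx hy) (by norm_num) ?_
    intro k hk
    obtain ⟨h1, h2⟩ := hs k hk
    exact hDW k h1 h2
  -- difference of two ordered points on the u-arm lies in cone K
  have hKarm : ∀ i j : ℕ, ∀ a b : ℝ, 1 ≤ i → i ≤ m → 1 ≤ j → j ≤ m →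
      0 ≤ a → a ≤ 1 → 0 ≤ b → b ≤ 1 → (i < j ∨ (i = j ∧ a ≤ b)) →
      0 ≤ ((u (j-1) + b • (u j - u (j-1))) - (u (i-1) + a • (u i - u (i-1)))).re ∧
        |((u (j-1) + b • (u j - u (j-1))) - (u (i-1) + a • (u i - u (i-1)))).im| * C ≤
          S * ((u (j-1) + b • (u j - u (j-1))) - (u (i-1) + a • (u i - u (i-1)))).re := by
    intro i j a b hi1 hiM hj1 hjM ha0 ha1 hb0 hb1 hord
    rcases hord with hlt | ⟨rfl, hab⟩
    · have htel : u (j-1) - u i = ∑ k ∈ Finset.Icc (i+1) (j-1), (u k - u (k-1)) := by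
        have h := tele u (i+1) (j-1) (by omega) (by omega)
        simpa using h
      have heq : (u (j-1) + b • (u j - u (j-1))) - (u (i-1) + a • (u i - u (i-1)))
          = ((∑ k ∈ Finset.Icc (i+1) (j-1), (u k - u (k-1)))
            + ((1-a) • (u i - u (i-1)) + b • (u j - u (j-1)))) := by
        rw [← htel]
        simp only [Complex.real_smul]
        push_cast
        ring
      rw [heq]
      exact hKadd _ _ (hKsum _ (fun k hk => by simp only [Finset.mem_Icc] at hk; omega))
        (hKadd _ _ (hKsmul (1-a) _ (by linarith)
            ⟨(hKU i hi1 hiM).1.le, (hKU i hi1 hiM).2⟩)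
          (hKsmul b _ hb0 ⟨(hKU j hj1 hjM).1.le, (hKU j hj1 hjM).2⟩))
    · have heq : (u (i-1) + b • (u i - u (i-1))) - (u (i-1) + a • (u i - u (i-1)))
          = (b - a) • (u i - u (i-1)) := by
        simp only [Complex.real_smul]; push_cast; ring
      rw [heq]
      exact hKsmul (b-a) _ (by linarith) ⟨(hKU i hi1 hiM).1.le, (hKU i hi1 hiM).2⟩
  -- now the set equality
  apply Set.eq_singleton_iff_unique_mem.mpr
  constructor
  · refine ⟨?_, ?_⟩
    · refine Set.mem_biUnion (show (1:ℕ) ∈ Finset.Icc 1 m from Finset.mem_Icc.mpr ⟨le_rfl, hm⟩) ?_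
      have h11 : (1:ℕ) - 1 = 0 := by norm_num
      rw [h11]
      exact left_mem_segment ℝ (u 0) (u 1)
    · refine Set.mem_biUnion (show (1:ℕ) ∈ Finset.Icc 1 m from Finset.mem_Icc.mpr ⟨le_rfl, hm⟩) ?_
      have h11 : (1:ℕ) - 1 = 0 := by norm_num
      rw [h11, h0]
      exact left_mem_segment ℝ (v 0) (v 1)
  · rintro p ⟨hpu, hpv⟩
    simp only [Set.mem_iUnion, exists_prop] at hpu hpv
    obtain ⟨i, hi, hpseg⟩ := hpu
    obtain ⟨j, hj, hqseg⟩ := hpv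
    rw [Finset.mem_Icc] at hi hj
    rw [segment_eq_image'] at hpseg hqseg
    obtain ⟨a, ⟨ha0, ha1⟩, hp⟩ := hpseg
    obtain ⟨b, ⟨hb0, hb1⟩, hq⟩ := hqseg
    dsimp only at hp hq
    -- d = p - (corresponding point on u-arm)
    set p' : ℂ := u (j-1) + b • (u j - u (j-1)) with hp'
    have hd : p - p' = (∑ k ∈ Finset.Icc 1 (j-1), ((v k - v (k-1)) - (u k - u (k-1))))
        + b • ((v j - v (j-1)) - (u j - u (j-1))) := by
      have htelv : v (j-1) - v 0 = ∑ k ∈ Finset.Icc 1 (j-1), (v k - v (k-1)) := by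
        have h := tele v 1 (j-1) le_rfl (by omega)
        simpa using h
      have htelu : u (j-1) - u 0 = ∑ k ∈ Finset.Icc 1 (j-1), (u k - u (k-1)) := by
        have h := tele u 1 (j-1) le_rfl (by omega)
        simpa using h
      have hvu : v (j-1) - u (j-1)
          = ∑ k ∈ Finset.Icc 1 (j-1), ((v k - v (k-1)) - (u k - u (k-1))) := by
        rw [Finset.sum_sub_distrib, ← htelv, ← htelu, h0]
        ring
      rw [← hq, hp']
      rw [show v (j-1) + b • (v j - v (j-1)) - (u (j-1) + b • (u j - u (j-1)))
          = (v (j-1) - u (j-1)) + b • ((v j - v (j-1)) - (u j - u (j-1))) by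
        simp only [Complex.real_smul]; push_cast; ring]
      rw [hvu]
    -- d is in the cone D
    have hDd : 0 ≤ (p - p').im ∧ |(p - p').re| * C ≤ S * (p - p').im := by
      rw [hd]
      exact hDadd _ _ (hDsum _ (fun k hk => by simp only [Finset.mem_Icc] at hk; omega))
        (hDsmul b _ hb0 (hDW j hj.1 hj.2))
    -- the difference of two u-arm points satisfies |im| * C <= S * |re|
    have habsK : ∀ z : ℂ, (0 ≤ z.re ∧ |z.im| * C ≤ S * z.re) →
        |z.im| * C ≤ S * |z.re| := by
      rintro z ⟨h1, h2⟩; rw [_root_.abs_of_nonneg h1]; exact h2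
    have hswap : ∀ z w : ℂ, |(z - w).im| = |(w - z).im| ∧ |(z - w).re| = |(w - z).re| := by
      intro z w
      constructor
      · rw [← neg_sub w z, Complex.neg_im, abs_neg]
      · rw [← neg_sub w z, Complex.neg_re, abs_neg]
    have hKd : |(p - p').im| * C ≤ S * |(p - p').re| := by
      rcases lt_trichotomy i j with hij | hij | hij
      · have h := habsK _ (hKarm i j a b hi.1 hi.2 hj.1 hj.2 ha0 ha1 hb0 hb1 (Or.inl hij))
        rw [hp] at h
        rw [(hswap p p').1, (hswap p p').2]
        exact h
      · subst hij
        rcases le_total a b with hab | hab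
        · have h := habsK _ (hKarm i i a b hi.1 hi.2 hi.1 hi.2 ha0 ha1 hb0 hb1
            (Or.inr ⟨rfl, hab⟩))
          rw [hp] at h
          rw [(hswap p p').1, (hswap p p').2]
          exact h
        · have h := habsK _ (hKarm i i b a hi.1 hi.2 hi.1 hi.2 hb0 hb1 ha0 ha1
            (Or.inr ⟨rfl, hab⟩))
          rw [hp] at h
          exact h
      · have h := habsK _ (hKarm j i b a hj.1 hj.2 hi.1 hi.2 hb0 hb1 ha0 ha1 (Or.inl hij))
        rw [hp] at h
        exact h
    -- conclude: im part must vanish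
    have him0 : (p - p').im ≤ 0 := by
      obtain ⟨h1, h2⟩ := hDd
      rw [_root_.abs_of_nonneg h1] at hKd
      nlinarith [abs_nonneg (p - p').re]
    -- strictness forces j = 1 and b = 0
    have hj1b : j = 1 ∧ b = 0 := by
      by_contra hcon
      have hpos : 0 < (p - p').im := by
        rw [hd]
        rw [Complex.add_im]
        have hsmul_im : (b • ((v j - v (j-1)) - (u j - u (j-1)))).im
            = b * ((v j - v (j-1)) - (u j - u (j-1))).im := by simp
        rw [hsmul_im, Complex.im_sum]
        rcases eq_or_lt_of_le hj.1 with h1j | h2j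
        · -- j = 1
          have hj1 : j = 1 := h1j.symm
          subst hj1
          have hb : b ≠ 0 := fun hb => hcon ⟨rfl, hb⟩
          have hbpos : 0 < b := lt_of_le_of_ne hb0 (Ne.symm hb)
          have : Finset.Icc 1 (1-1) = (∅ : Finset ℕ) := by
            apply Finset.Icc_eq_empty; omega
          rw [this, Finset.sum_empty]
          have : ((v 1 - v (1-1)) - (u 1 - u (1-1))).im
              = ((v 1 - v 0) - (u 1 - u 0)).im := by norm_num
          rw [this]
          nlinarith [hDW1]
        · -- j ≥ 2
          have h1mem : (1:ℕ) ∈ Finset.Icc 1 (j-1) := Finset.mem_Icc.mpr ⟨le_rfl, by omega⟩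
          have hsum_ge : ((v 1 - v (1-1)) - (u 1 - u (1-1))).im
              ≤ ∑ k ∈ Finset.Icc 1 (j-1), ((v k - v (k-1)) - (u k - u (k-1))).im :=
            Finset.single_le_sum
              (fun k hk => by
                simp only [Finset.mem_Icc] at hk
                exact (hDW k hk.1 (by omega)).1) h1mem
          have h1e : ((v 1 - v (1-1)) - (u 1 - u (1-1))).im
              = ((v 1 - v 0) - (u 1 - u 0)).im := by norm_num
          rw [h1e] at hsum_ge
          have hb_term : 0 ≤ b * ((v j - v (j-1)) - (u j - u (j-1))).im :=
            mul_nonneg hb0 (hDW j hj.1 hj.2).1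
          nlinarith [hDW1]
      linarith
    obtain ⟨rfl, rfl⟩ := hj1b
    have h11 : (1:ℕ) - 1 = 0 := by norm_num
    rw [h11, zero_smul, add_zero] at hq
    simpa using hq.symm.trans h0.symm
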